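/- Let K ∈ ℝ, λ ∈ ℝ, D > 0 and a > 1, and set s = 1 - 1/a ∈ (0, 1). Let f : ℝ → ℝ be twice continuously differentiable on [-D, D] with f(x) > 0 for all x ∈ (-D, D), f(-D) = f(D) = 0, and f''(x) - K x f'(x) = -(λ - K) f(x) for all x ∈ (-D, D). Then, with u = f^{a/2}, one has the identity 4s(1-s) ∫_{-D}^{D} (u'(x))² dx = (λ - K s) ∫_{-D}^{D} u(x)² dx, both integrals being finite. -/

import Mathlib

open Real Set MeasureTheory Filter Topology

/-- Rayleigh-quotient identity
`4s(1-s) ∫ (u')² = (λ - Ks) ∫ u²` with `u = f^{a/2}` and `s = 1 - 1/a`, for a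
positive Dirichlet eigenfunction `f` of `f'' - Kxf' = -(λ-K)f` on `(-D, D)`;
both integrals are finite. -/
theorem rayleigh_quotient_identity
    (K lam D a s : ℝ) (hD : 0 < D) (ha : 1 < a) (hs : s = 1 - 1 / a)
    (f : ℝ → ℝ) (hf : ContDiffOn ℝ 2 f (Set.Icc (-D) D))
    (hpos : ∀ x ∈ Set.Ioo (-D) D, 0 < f x)
    (hb1 : f (-D) = 0) (hb2 : f D = 0)
    (hode : ∀ x ∈ Set.Ioo (-D) D,
      deriv (deriv f) x - K * x * deriv f x = -(lam - K) * f x) :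
    IntervalIntegrable (fun x => (deriv (fun y => f y ^ (a / 2)) x) ^ 2) volume (-D) D ∧
    IntervalIntegrable (fun x => (f x ^ (a / 2)) ^ 2) volume (-D) D ∧
    4 * s * (1 - s) * (∫ x in (-D)..D, (deriv (fun y => f y ^ (a / 2)) x) ^ 2)
      = (lam - K * s) * ∫ x in (-D)..D, (f x ^ (a / 2)) ^ 2 := by
  have ha0 : (0 : ℝ) < a := lt_trans one_pos ha
  have hane : a ≠ 0 := ne_of_gt ha0
  have ha1 : a - 1 ≠ 0 := ne_of_gt (by linarith)
  have hDD : -D < D := by linarith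
  have hUD : UniqueDiffOn ℝ (Icc (-D) D) := uniqueDiffOn_Icc hDD
  set g : ℝ → ℝ := fun y => f y ^ (a / 2) with hgdef
  set φ : ℝ → ℝ := fun x => (deriv g x) ^ 2 with hφdef
  set F1 : ℝ → ℝ := derivWithin f (Icc (-D) D) with hF1def
  have hfc : ContinuousOn f (Icc (-D) D) := hf.continuousOn
  have hF1c : ContinuousOn F1 (Icc (-D) D) :=
    hf.continuousOn_derivWithin hUD (by norm_num)
  have hC1 : ContDiffOn ℝ 1 F1 (Icc (-D) D) := hf.derivWithin hUD (by norm_num)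
  have hmemnhds : ∀ x ∈ Ioo (-D) D, Icc (-D) D ∈ 𝓝 x := fun x hx =>
    Icc_mem_nhds hx.1 hx.2
  have hF1eq : ∀ x ∈ Ioo (-D) D, F1 x = deriv f x := fun x hx =>
    derivWithin_of_mem_nhds (hmemnhds x hx)
  have hdf : ∀ x ∈ Ioo (-D) D, HasDerivAt f (F1 x) x := by
    intro x hx
    have h1 : DifferentiableAt ℝ f x :=
      ((hf.differentiableOn (by norm_num)) x (Ioo_subset_Icc_self hx)).differentiableAt
        (hmemnhds x hx)
    rw [hF1eq x hx]
    exact h1.hasDerivAt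
  have hdf2 : ∀ x ∈ Ioo (-D) D, HasDerivAt (deriv f) (deriv (deriv f) x) x := by
    intro x hx
    have h1 : DifferentiableAt ℝ F1 x :=
      ((hC1.differentiableOn one_ne_zero) x (Ioo_subset_Icc_self hx)).differentiableAt
        (hmemnhds x hx)
    have h2 : deriv f =ᶠ[𝓝 x] F1 := by
      filter_upwards [isOpen_Ioo.mem_nhds hx] with y hy using (hF1eq y hy).symm
    exact (h1.congr_of_eventuallyEq h2).hasDerivAt
  have hg : ∀ x ∈ Ioo (-D) D,
      HasDerivAt g (F1 x * (a / 2) * f x ^ (a / 2 - 1)) x := fun x hx =>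
    (hdf x hx).rpow_const (Or.inl (hpos x hx).ne')
  have hderivg : ∀ x ∈ Ioo (-D) D,
      deriv g x = F1 x * (a / 2) * f x ^ (a / 2 - 1) := fun x hx => (hg x hx).deriv
  have hφc : ContinuousOn φ (Ioo (-D) D) := by
    have h1 : ContinuousOn (fun x => (F1 x * (a / 2) * f x ^ (a / 2 - 1)) ^ 2)
        (Ioo (-D) D) :=
      (((hF1c.mono Ioo_subset_Icc_self).mul continuousOn_const).mul
        ((hfc.mono Ioo_subset_Icc_self).rpow_const fun x hx =>
          Or.inl (hpos x hx).ne')).pow 2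
    exact h1.congr fun x hx => by rw [hφdef]; simp only; rw [hderivg x hx]
  have hfac : ContinuousOn (fun x => f x ^ a) (Icc (-D) D) :=
    hfc.rpow_const fun x _ => Or.inr ha0.le
  -- the auxiliary function Ψ
  set Ψ : ℝ → ℝ := fun x => f x ^ (a - 1) * F1 x - K / a * (x * f x ^ a) with hΨdef
  have hΨc : ContinuousOn Ψ (Icc (-D) D) :=
    ((hfc.rpow_const fun x _ => Or.inr (by linarith)).mul hF1c).sub
      (continuousOn_const.mul (continuousOn_id.mul hfac))
  have hΨ1 : Ψ (-D) = 0 := by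
    simp [hΨdef, hb1, Real.zero_rpow ha1, Real.zero_rpow hane]
  have hΨ2 : Ψ D = 0 := by
    simp [hΨdef, hb2, Real.zero_rpow ha1, Real.zero_rpow hane]
  -- key pointwise derivative identity
  have hkey : ∀ x ∈ Ioo (-D) D,
      HasDerivAt Ψ (4 * s * (1 - s) * φ x - (lam - K * s) * f x ^ a) x := by
    intro x hx
    have hpx : 0 < f x := hpos x hx
    have hne : f x ≠ 0 := hpx.ne'
    have h1 : HasDerivAt (fun y => f y ^ (a - 1))
        (F1 x * (a - 1) * f x ^ (a - 1 - 1)) x := (hdf x hx).rpow_const (Or.inl hne)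
    have h2 : HasDerivAt (fun y => f y ^ a)
        (F1 x * a * f x ^ (a - 1)) x := (hdf x hx).rpow_const (Or.inl hne)
    have h3 : HasDerivAt (fun y => f y ^ (a - 1) * deriv f y)
        (F1 x * (a - 1) * f x ^ (a - 1 - 1) * deriv f x
          + f x ^ (a - 1) * deriv (deriv f) x) x := h1.mul (hdf2 x hx)
    have heq : (fun y => f y ^ (a - 1) * F1 y) =ᶠ[𝓝 x]
        (fun y => f y ^ (a - 1) * deriv f y) := by
      filter_upwards [isOpen_Ioo.mem_nhds hx] with y hy
      rw [hF1eq y hy]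
    have h4 : HasDerivAt (fun y => f y ^ (a - 1) * F1 y)
        (F1 x * (a - 1) * f x ^ (a - 1 - 1) * deriv f x
          + f x ^ (a - 1) * deriv (deriv f) x) x := h3.congr_of_eventuallyEq heq
    have h5 : HasDerivAt (fun y => y * f y ^ a)
        (1 * f x ^ a + x * (F1 x * a * f x ^ (a - 1))) x := (hasDerivAt_id x).mul h2
    have h6 := h4.sub (h5.const_mul (K / a))
    convert h6 using 1
    · rfl
    · rfl
    · rfl
    have hode2 : deriv (deriv f) x = K * x * F1 x - (lam - K) * f x := by
      have h := hode x hx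
      rw [← hF1eq x hx] at h
      linarith
    rw [hφdef]; simp only
    rw [hderivg x hx, hode2, ← hF1eq x hx]
    have e1 : f x ^ (a - 1 - 1) = f x ^ (a - 2) := by
      rw [show a - 1 - 1 = a - 2 by ring]
    have e2 : (f x ^ (a / 2 - 1)) ^ 2 = f x ^ (a - 2) := by
      rw [← Real.rpow_natCast (f x ^ (a / 2 - 1)) 2, ← Real.rpow_mul hpx.le]
      norm_num
      rw [show (a / 2 - 1) * 2 = a - 2 by ring]
    have e3 : f x ^ (a - 1) = f x ^ (a - 2) * f x := by
      rw [← Real.rpow_add_one hne, show a - 2 + 1 = a - 1 by ring]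
    have e4 : f x ^ a = f x ^ (a - 2) * (f x * f x) := by
      rw [← mul_assoc, ← Real.rpow_add_one hne, ← Real.rpow_add_one hne]
      congr 1
      ring
    rw [mul_pow, mul_pow, e2, e1, e3, e4]
    subst hs
    field_simp
    ring
  -- FTC on compact subintervals
  have key_cd : ∀ c d : ℝ, c ∈ Ioo (-D) D → d ∈ Ioo (-D) D → c ≤ d →
      4 * s * (1 - s) * ∫ x in c..d, φ x
        = Ψ d - Ψ c + (lam - K * s) * ∫ x in c..d, f x ^ a := by
    intro c d hc hd hcd
    have hsub : Icc c d ⊆ Ioo (-D) D := Icc_subset_Ioo hc.1 hd.2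
    have huicc : uIcc c d = Icc c d := uIcc_of_le hcd
    have hφi : IntervalIntegrable φ volume c d := by
      apply ContinuousOn.intervalIntegrable
      rw [huicc]; exact hφc.mono hsub
    have hfai : IntervalIntegrable (fun x => f x ^ a) volume c d := by
      apply ContinuousOn.intervalIntegrable
      rw [huicc]
      exact hfac.mono (hsub.trans Ioo_subset_Icc_self)
    have hint : IntervalIntegrable
        (fun x => 4 * s * (1 - s) * φ x - (lam - K * s) * f x ^ a) volume c d :=
      (hφi.const_mul _).sub (hfai.const_mul _)
    have hftc := intervalIntegral.integral_eq_sub_of_hasDerivAt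
      (f := Ψ) (f' := fun x => 4 * s * (1 - s) * φ x - (lam - K * s) * f x ^ a)
      (fun x hx => hkey x (hsub (huicc ▸ hx))) hint
    rw [intervalIntegral.integral_sub (hφi.const_mul _) (hfai.const_mul _),
      intervalIntegral.integral_const_mul, intervalIntegral.integral_const_mul] at hftc
    linarith
  -- the exhausting sequence
  set e : ℕ → ℝ := fun n => D - D / (n + 2) with hedef
  have he1 : ∀ n, 0 < e n := by
    intro n
    have h2 : (0 : ℝ) < (n : ℝ) + 2 := by positivity
    have : D / ((n : ℝ) + 2) < D := by
      apply div_lt_self hD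
      have : (0 : ℝ) ≤ (n : ℝ) := Nat.cast_nonneg n
      linarith
    simpa [hedef] using by linarith
  have he2 : ∀ n, e n < D := by
    intro n
    have h2 : (0 : ℝ) < (n : ℝ) + 2 := by positivity
    have : 0 < D / ((n : ℝ) + 2) := div_pos hD h2
    simp only [hedef]; linarith
  have hemem : ∀ n, e n ∈ Ioo (-D) D := fun n =>
    ⟨by have := he1 n; linarith, he2 n⟩
  have hememn : ∀ n, -e n ∈ Ioo (-D) D := fun n =>
    ⟨by have := he2 n; linarith, by have := he1 n; linarith⟩
  have hemono : Monotone e := by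
    intro n m hnm
    simp only [hedef]
    have h1 : (0 : ℝ) < (n : ℝ) + 2 := by positivity
    have h2 : ((n : ℝ) + 2) ≤ (m : ℝ) + 2 := by
      have : (n : ℝ) ≤ m := Nat.cast_le.mpr hnm
      linarith
    have := div_le_div_of_nonneg_left hD.le h1 h2
    linarith
  have hetend : Tendsto e atTop (𝓝 D) := by
    have h1 : Tendsto (fun n : ℕ => ((n : ℝ) + 2)) atTop atTop :=
      tendsto_atTop_add_const_right _ 2 tendsto_natCast_atTop_atTop
    have h2 : Tendsto (fun n : ℕ => D / ((n : ℝ) + 2)) atTop (𝓝 0) := by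
      simpa [div_eq_mul_inv] using
        (h1.inv_tendsto_atTop).const_mul D
    have h3 := h2.const_sub D
    simpa [hedef] using h3
  have hneg_tend : Tendsto (fun n => -e n) atTop (𝓝 (-D)) := hetend.neg
  -- monotone union of sets
  set S : ℕ → Set ℝ := fun n => Ioo (-e n) (e n) with hSdef
  have hSmeas : ∀ n, MeasurableSet (S n) := fun n => measurableSet_Ioo
  have hSmono : Monotone S := by
    intro n m hnm
    exact Ioo_subset_Ioo (neg_le_neg (hemono hnm)) (hemono hnm)
  have hSsub : ∀ n, S n ⊆ Ioo (-D) D := fun n =>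
    Ioo_subset_Ioo (neg_le_neg (he2 n).le) (he2 n).le
  have hSunion : (⋃ n, S n) = Ioo (-D) D := by
    apply Subset.antisymm
    · exact iUnion_subset hSsub
    · intro x hx
      have habs : |x| < D := abs_lt.mpr ⟨hx.1, hx.2⟩
      have : ∀ᶠ n in atTop, |x| < e n := hetend.eventually (eventually_gt_nhds habs)
      obtain ⟨n, hn⟩ := this.exists
      exact mem_iUnion.mpr ⟨n, abs_lt.mp hn⟩
  -- integrability of f^a on Ioo(-D, D)
  have hfa_int : IntegrableOn (fun x => f x ^ a) (Ioo (-D) D) volume :=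
    (hfac.integrableOn_Icc).mono_set Ioo_subset_Icc_self
  set A : ℝ := ∫ x in Ioo (-D) D, f x ^ a with hAdef
  -- limits
  have hΨe : Tendsto (fun n => Ψ (e n)) atTop (𝓝 0) := by
    have h1 : Tendsto e atTop (𝓝[Icc (-D) D] D) := by
      apply tendsto_nhdsWithin_of_tendsto_nhds_of_eventually_within _ hetend
      exact Eventually.of_forall fun n => Ioo_subset_Icc_self (hemem n)
    have h2 := (hΨc D ⟨hDD.le, le_refl D⟩).tendsto.comp h1
    rwa [hΨ2] at h2
  have hΨne : Tendsto (fun n => Ψ (-e n)) atTop (𝓝 0) := by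
    have h1 : Tendsto (fun n => -e n) atTop (𝓝[Icc (-D) D] (-D)) := by
      apply tendsto_nhdsWithin_of_tendsto_nhds_of_eventually_within _ hneg_tend
      exact Eventually.of_forall fun n => Ioo_subset_Icc_self (hememn n)
    have h2 := (hΨc (-D) ⟨le_refl _, hDD.le⟩).tendsto.comp h1
    rwa [hΨ1] at h2
  have hA_tend : Tendsto (fun n => ∫ x in S n, f x ^ a) atTop (𝓝 A) := by
    have := tendsto_setIntegral_of_monotone hSmeas hSmono
      (hSunion ▸ hfa_int)
    rwa [hSunion] at this
  -- interval integrals over [-e n, e n]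
  have hcd_le : ∀ n, -e n ≤ e n := fun n => by have := he1 n; linarith
  have hPn_eq : ∀ n, (∫ x in (-e n)..(e n), φ x) = ∫ x in S n, φ x := by
    intro n
    rw [intervalIntegral.integral_of_le (hcd_le n), integral_Ioc_eq_integral_Ioo]
  have hAn_eq : ∀ n, (∫ x in (-e n)..(e n), f x ^ a) = ∫ x in S n, f x ^ a := by
    intro n
    rw [intervalIntegral.integral_of_le (hcd_le n), integral_Ioc_eq_integral_Ioo]
  have hkey_n : ∀ n, 4 * s * (1 - s) * ∫ x in S n, φ x
      = Ψ (e n) - Ψ (-e n) + (lam - K * s) * ∫ x in S n, f x ^ a := by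
    intro n
    rw [← hPn_eq, ← hAn_eq]
    exact key_cd _ _ (hememn n) (hemem n) (hcd_le n)
  -- positivity of the constant
  have hsa : 1 - s = 1 / a := by rw [hs]; ring
  have hs_pos : 0 < s := by
    rw [hs]
    have : 1 / a < 1 := by
      rw [div_lt_one ha0]; exact ha
    linarith
  have hs_lt : s < 1 := by
    rw [hs]
    have : 0 < 1 / a := by positivity
    linarith
  have hcpos : 0 < 4 * s * (1 - s) := by
    have h1 : 0 < 1 - s := by linarith
    positivity
  set L : ℝ := (lam - K * s) * A / (4 * s * (1 - s)) with hLdef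
  have hRHS_tend : Tendsto (fun n => 4 * s * (1 - s) * ∫ x in S n, φ x) atTop
      (𝓝 ((lam - K * s) * A)) := by
    have h1 : Tendsto (fun n => Ψ (e n) - Ψ (-e n)
        + (lam - K * s) * ∫ x in S n, f x ^ a) atTop
        (𝓝 (0 - 0 + (lam - K * s) * A)) :=
      (hΨe.sub hΨne).add (hA_tend.const_mul _)
    simp only [hkey_n]
    simpa using h1
  have hPn_tend : Tendsto (fun n => ∫ x in S n, φ x) atTop (𝓝 L) := by
    have h1 := hRHS_tend.const_mul (4 * s * (1 - s))⁻¹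
    have h2 : ∀ n, (4 * s * (1 - s))⁻¹ * (4 * s * (1 - s) * ∫ x in S n, φ x)
        = ∫ x in S n, φ x := by
      intro n
      rw [← mul_assoc, inv_mul_cancel₀ hcpos.ne', one_mul]
    simp only [h2] at h1
    have h3 : (4 * s * (1 - s))⁻¹ * ((lam - K * s) * A) = L := by
      rw [hLdef, inv_mul_eq_div]
    rwa [h3] at h1
  -- integrability of φ on S n
  have hφ_int_n : ∀ n, IntegrableOn φ (S n) volume := by
    intro n
    have hIccsub : Icc (-e n) (e n) ⊆ Ioo (-D) D :=
      Icc_subset_Ioo (hememn n).1 (hemem n).2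
    exact ((hφc.mono hIccsub).integrableOn_Icc).mono_set Ioo_subset_Icc_self
  have hφ0 : ∀ x, 0 ≤ φ x := fun x => sq_nonneg _
  have hφmeas : Measurable φ := (measurable_deriv g).pow_const 2
  -- the sequence of integrals is monotone and bounded by L
  have hPn_mono : Monotone fun n => ∫ x in S n, φ x := by
    intro n m hnm
    exact setIntegral_mono_set (hφ_int_n m)
      (Eventually.of_forall fun x => hφ0 x)
      (HasSubset.Subset.eventuallyLE (hSmono hnm))
  have hPn_le : ∀ n, (∫ x in S n, φ x) ≤ L := fun n =>
    hPn_mono.ge_of_tendsto hPn_tend n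
  -- integrability of φ on Ioo(-D, D)
  have hφ_int : IntegrableOn φ (Ioo (-D) D) volume := by
    constructor
    · exact hφmeas.aestronglyMeasurable.restrict
    · rw [hasFiniteIntegral_iff_ofReal (Eventually.of_forall hφ0)]
      have hlin : ∫⁻ x in Ioo (-D) D, ENNReal.ofReal (φ x)
          = ⨆ n, ∫⁻ x in S n, ENNReal.ofReal (φ x) := by
        rw [← hSunion]
        exact setLIntegral_iUnion_of_directed _ hSmono.directed_le
      rw [hlin]
      have hb : ∀ n, (∫⁻ x in S n, ENNReal.ofReal (φ x)) ≤ ENNReal.ofReal L := by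
        intro n
        rw [← ofReal_integral_eq_lintegral_ofReal (hφ_int_n n)
          (Eventually.of_forall hφ0)]
        exact ENNReal.ofReal_le_ofReal (hPn_le n)
      exact lt_of_le_of_lt (iSup_le hb) ENNReal.ofReal_lt_top
  -- the limit identifies the integral
  have hφ_total : (∫ x in Ioo (-D) D, φ x) = L := by
    have h1 := tendsto_setIntegral_of_monotone hSmeas hSmono (hSunion ▸ hφ_int)
    rw [hSunion] at h1
    exact tendsto_nhds_unique h1 hPn_tend
  -- assemble the three conclusions
  have hφ_II : IntervalIntegrable φ volume (-D) D := by
    rw [intervalIntegrable_iff_integrableOn_Ioo_of_le hDD.le]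
    exact hφ_int
  have hu2c : ContinuousOn (fun x => (f x ^ (a / 2)) ^ 2) (Icc (-D) D) :=
    (hfc.rpow_const fun x _ => Or.inr (by positivity)).pow 2
  have hu2_II : IntervalIntegrable (fun x => (f x ^ (a / 2)) ^ 2) volume (-D) D := by
    apply ContinuousOn.intervalIntegrable
    rwa [uIcc_of_le hDD.le]
  refine ⟨hφ_II, hu2_II, ?_⟩
  have hLHS : (∫ x in (-D)..D, φ x) = L := by
    rw [intervalIntegral.integral_of_le hDD.le, integral_Ioc_eq_integral_Ioo, hφ_total]
  have hRHS : (∫ x in (-D)..D, (f x ^ (a / 2)) ^ 2) = A := by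
    rw [intervalIntegral.integral_of_le hDD.le, integral_Ioc_eq_integral_Ioo, hAdef]
    apply setIntegral_congr_fun measurableSet_Ioo
    intro x hx
    have hpx : 0 ≤ f x := (hpos x hx).le
    show (f x ^ (a / 2)) ^ 2 = f x ^ a
    rw [← Real.rpow_natCast (f x ^ (a / 2)) 2, ← Real.rpow_mul hpx]
    push_cast
    rw [show a / 2 * 2 = a by ring]
  show 4 * s * (1 - s) * (∫ x in (-D)..D, φ x)
      = (lam - K * s) * ∫ x in (-D)..D, (f x ^ (a / 2)) ^ 2
  rw [hLHS, hRHS, hLdef]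
  field_simp
  rw [mul_assoc, mul_div_cancel_left₀ _ (by linarith : (0:ℝ) < 1 - s).ne']
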